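/- Let S be a set, f : S → S a bijection, and p ∈ S with f(p) = p. Let e_s, e_u : [0, ∞) → S be injective maps with e_s(0) = e_u(0) = p and such that e_s(t) ≠ e_u(0) etc. only at parameter 0, i.e. e_s((0,∞)) and e_u((0,∞)) do not contain p. Assume: (i) there exist strictly increasing continuous bijections σ, τ : [0, ∞) → [0, ∞) with f(e_s(t)) = e_s(σ(t)) and f(e_u(t)) = e_u(τ(t)) for all t ≥ 0; (ii) σ(t) < t and τ(t) > t for all t > 0; (iii) for all a, b > 0 the set e_s([0, a]) ∩ e_u([0, b]) is finite. For a point x ∈ e_s((0, ∞)) ∩ e_u((0, ∞)), writing x = e_s(a) = e_u(b), define I^s_x = e_s([0, a]), I^u_x = e_u([0, b]), and n(x) = the cardinality of (I^s_x ∩ I^u_x) \ {p}. Then for every N ∈ ℕ, the set of points x ∈ e_s((0, ∞)) ∩ e_u((0, ∞)) with n(x) ≤ N consists of finitely many f-orbits: there exist finitely many points x₁, …, x_m ∈ e_s((0, ∞)) ∩ e_u((0, ∞)) such that every x ∈ e_s((0, ∞)) ∩ e_u((0, ∞)) with n(x) ≤ N equals f^k(x_i) for some k ∈ ℤ and some 1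 ≤ i ≤ m. -/

import Mathlib

open scoped NNReal

/-- Finiteness of homoclinic orbits of bounded intersection number, abstractly.
`f` is a bijection of a set `S` fixing `p`; `e_s` and `e_u` parametrize the
stable and unstable separatrices of `p` (injective curves through `p` at
parameter `0`, avoiding `p` for positive parameters); `f` acts on them by
strictly increasing continuous reparametrizations `σ` (with `σ t < t`,
contraction) and `τ` (with `τ t > t`, expansion); and any two compact arcs
`e_s [0,a]`, `e_u [0,b]` intersect in a finite set. For a homoclinic point
`x = e_s a = e_u b` (with `a, b > 0`) the intersection number `n(x)` is the
cardinality of `(e_s [0,a] ∩ e_u [0,b]) \ {p}`. Then for every `N` the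
homoclinic points with `n(x) ≤ N` form finitely many `f`-orbits. -/

private lemma iter_unbounded_prv (τ : ℝ≥0 → ℝ≥0) (hcont : Continuous τ)
    (hgt : ∀ t : ℝ≥0, 0 < t → t < τ t) (c : ℝ≥0) (hc : 0 < c) (M : ℝ≥0) :
    ∃ n : ℕ, M < τ^[n] c := by
  by_contra h
  push_neg at h
  have hpos : ∀ n, 0 < τ^[n] c := by
    intro n
    induction n with
    | zero => exact hc
    | succ n ih =>
      rw [Function.iterate_succ_apply']
      exact ih.trans (hgt _ ih)
  have hmono : Monotone fun n => τ^[n] c := by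
    apply monotone_nat_of_le_succ
    intro n
    rw [Function.iterate_succ_apply']
    exact (hgt _ (hpos n)).le
  have hbdd : BddAbove (Set.range fun n => τ^[n] c) := by
    refine ⟨M, ?_⟩
    rintro x ⟨n, rfl⟩
    exact h n
  have htend := tendsto_atTop_ciSup hmono hbdd
  have htend3 : Filter.Tendsto (fun n => τ^[n+1] c) Filter.atTop
      (nhds (τ (⨆ n, τ^[n] c))) := by
    simpa [Function.comp_def, Function.iterate_succ_apply'] using ((hcont.tendsto _).comp htend)
  have htend2 : Filter.Tendsto (fun n => τ^[n+1] c) Filter.atTop (nhds (⨆ n, τ^[n] c)) := by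
    simpa [Function.comp_def] using htend.comp (Filter.tendsto_add_atTop_nat 1)
  have hfix : τ (⨆ n, τ^[n] c) = ⨆ n, τ^[n] c := tendsto_nhds_unique htend3 htend2
  have hle : c ≤ ⨆ n, τ^[n] c := by simpa using le_ciSup hbdd 0
  exact absurd hfix (ne_of_gt (hgt _ (hc.trans_le hle)))

/-- main -/
theorem finitely_many_orbits_of_bounded_intersection_number
    {S : Type*} (f : Equiv.Perm S) (p : S) (hp : f p = p)
    (e_s e_u : ℝ≥0 → S)
    (hinj_s : Function.Injective e_s) (hinj_u : Function.Injective e_u)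
    (hs0 : e_s 0 = p) (hu0 : e_u 0 = p)
    (hps : ∀ t : ℝ≥0, 0 < t → e_s t ≠ p)
    (hpu : ∀ t : ℝ≥0, 0 < t → e_u t ≠ p)
    (σ τ : ℝ≥0 → ℝ≥0)
    (hσ_mono : StrictMono σ) (hσ_cont : Continuous σ) (hσ_bij : Function.Bijective σ)
    (hτ_mono : StrictMono τ) (hτ_cont : Continuous τ) (hτ_bij : Function.Bijective τ)
    (hfs : ∀ t : ℝ≥0, f (e_s t) = e_s (σ t))
    (hfu : ∀ t : ℝ≥0, f (e_u t) = e_u (τ t))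
    (hσ_lt : ∀ t : ℝ≥0, 0 < t → σ t < t)
    (hτ_gt : ∀ t : ℝ≥0, 0 < t → t < τ t)
    (hfin : ∀ a b : ℝ≥0, 0 < a → 0 < b →
      (e_s '' Set.Icc 0 a ∩ e_u '' Set.Icc 0 b).Finite) :
    ∀ N : ℕ, ∃ T : Finset S,
      (∀ x ∈ T, (∃ a : ℝ≥0, 0 < a ∧ e_s a = x) ∧ (∃ b : ℝ≥0, 0 < b ∧ e_u b = x)) ∧
      ∀ a b : ℝ≥0, 0 < a → 0 < b → e_s a = e_u b →
        ((e_s '' Set.Icc 0 a ∩ e_u '' Set.Icc 0 b) \ {p}).ncard ≤ N →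
        ∃ x ∈ T, ∃ k : ℤ, e_s a = (f ^ k) x := by
  classical
  intro N
  -- basic facts
  have hτ1 : 1 < τ 1 := hτ_gt 1 one_pos
  have hτ1pos : (0:ℝ≥0) < τ 1 := lt_trans one_pos hτ1
  have himg : ∀ (g : ℝ≥0 → ℝ≥0), StrictMono g → Function.Surjective g →
      ∀ a : ℝ≥0, g '' Set.Icc 0 a = Set.Icc 0 (g a) := by
    intro g hmono hsurj a
    ext x
    constructor
    · rintro ⟨t, ⟨-, hta⟩, rfl⟩
      exact ⟨zero_le, hmono.monotone hta⟩
    · rintro ⟨-, hx⟩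
      obtain ⟨t, rfl⟩ := hsurj x
      exact ⟨t, ⟨zero_le, (hmono.le_iff_le).mp hx⟩, rfl⟩
  -- one-step invariance of the intersection set
  have step : ∀ a b : ℝ≥0,
      (e_s '' Set.Icc 0 (σ a) ∩ e_u '' Set.Icc 0 (τ b)) \ {p}
        = f '' ((e_s '' Set.Icc 0 a ∩ e_u '' Set.Icc 0 b) \ {p}) := by
    intro a b
    have h1 : f '' (e_s '' Set.Icc 0 a) = e_s '' Set.Icc 0 (σ a) := by
      rw [Set.image_image]
      simp only [hfs]
      rw [← Set.image_image, himg σ hσ_mono hσ_bij.2]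
    have h2 : f '' (e_u '' Set.Icc 0 b) = e_u '' Set.Icc 0 (τ b) := by
      rw [Set.image_image]
      simp only [hfu]
      rw [← Set.image_image, himg τ hτ_mono hτ_bij.2]
    rw [Set.image_diff f.injective, Set.image_inter f.injective, h1, h2,
      Set.image_singleton, hp]
  have nstep : ∀ a b : ℝ≥0,
      ((e_s '' Set.Icc 0 (σ a) ∩ e_u '' Set.Icc 0 (τ b)) \ {p}).ncard
        = ((e_s '' Set.Icc 0 a ∩ e_u '' Set.Icc 0 b) \ {p}).ncard := by
    intro a b
    rw [step a b, Set.ncard_image_of_injective _ f.injective]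
  -- permutations of the parameter line
  set Sg : Equiv.Perm ℝ≥0 := Equiv.ofBijective σ hσ_bij with hSg
  set Te : Equiv.Perm ℝ≥0 := Equiv.ofBijective τ hτ_bij with hTe
  have hSapp : ∀ t, Sg t = σ t := fun t => rfl
  have hTapp : ∀ t, Te t = τ t := fun t => rfl
  -- equivariance for all integer powers
  have finv_u : ∀ t : ℝ≥0, f⁻¹ (e_u t) = e_u (Te⁻¹ t) := by
    intro t
    apply f.injective
    rw [Equiv.Perm.coe_inv, Equiv.apply_symm_apply, hfu]
    show e_u t = e_u (τ (Te⁻¹ t))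
    congr 1
    exact (Te.apply_symm_apply t).symm
  have finv_s : ∀ t : ℝ≥0, f⁻¹ (e_s t) = e_s (Sg⁻¹ t) := by
    intro t
    apply f.injective
    rw [Equiv.Perm.coe_inv, Equiv.apply_symm_apply, hfs]
    show e_s t = e_s (σ (Sg⁻¹ t))
    congr 1
    exact (Sg.apply_symm_apply t).symm
  have key_u : ∀ (k : ℤ) (t : ℝ≥0), (f ^ k) (e_u t) = e_u ((Te ^ k) t) := by
    intro k
    induction k using Int.induction_on with
    | zero => simp
    | succ n ih =>
      intro t
      rw [zpow_add_one, zpow_add_one, Equiv.Perm.mul_apply, Equiv.Perm.mul_apply,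
        hfu, ih, hTapp]
    | pred n ih =>
      intro t
      rw [zpow_sub_one, zpow_sub_one, Equiv.Perm.mul_apply, Equiv.Perm.mul_apply,
        finv_u, ih]
  have key_s : ∀ (k : ℤ) (t : ℝ≥0), (f ^ k) (e_s t) = e_s ((Sg ^ k) t) := by
    intro k
    induction k using Int.induction_on with
    | zero => simp
    | succ n ih =>
      intro t
      rw [zpow_add_one, zpow_add_one, Equiv.Perm.mul_apply, Equiv.Perm.mul_apply,
        hfs, ih, hSapp]
    | pred n ih =>
      intro t
      rw [zpow_sub_one, zpow_sub_one, Equiv.Perm.mul_apply, Equiv.Perm.mul_apply,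
        finv_s, ih]
  -- ℤ-invariance of the intersection number
  have ninv : ∀ (k : ℤ) (a b : ℝ≥0),
      ((e_s '' Set.Icc 0 ((Sg ^ k) a) ∩ e_u '' Set.Icc 0 ((Te ^ k) b)) \ {p}).ncard
        = ((e_s '' Set.Icc 0 a ∩ e_u '' Set.Icc 0 b) \ {p}).ncard := by
    intro k
    induction k using Int.induction_on with
    | zero => simp
    | succ n ih =>
      intro a b
      rw [zpow_add_one, zpow_add_one, Equiv.Perm.mul_apply, Equiv.Perm.mul_apply]
      rw [hSapp, hTapp] at *
      rw [ih (σ a) (τ b), nstep a b]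
    | pred n ih =>
      intro a b
      rw [zpow_sub_one, zpow_sub_one, Equiv.Perm.mul_apply, Equiv.Perm.mul_apply]
      rw [ih (Sg⁻¹ a) (Te⁻¹ b)]
      have := nstep (Sg⁻¹ a) (Te⁻¹ b)
      rw [show σ (Sg⁻¹ a) = a from Sg.apply_symm_apply a,
        show τ (Te⁻¹ b) = b from Te.apply_symm_apply b] at this
      exact this.symm
  -- the fundamental-domain set
  set X : Set S := {x : S | ∃ a b : ℝ≥0, 0 < a ∧ 1 < b ∧ b ≤ τ 1 ∧ e_s a = x ∧ e_u b = x ∧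
      ((e_s '' Set.Icc 0 a ∩ e_u '' Set.Icc 0 b) \ {p}).ncard ≤ N} with hX
  have hXw : ∀ y ∈ X, ∃ a b : ℝ≥0, 0 < a ∧ 1 < b ∧ b ≤ τ 1 ∧ e_s a = y ∧ e_u b = y ∧
      ((e_s '' Set.Icc 0 a ∩ e_u '' Set.Icc 0 b) \ {p}).ncard ≤ N := fun y hy => hy
  choose! wa wb hw1 hw2 hw3 hw4 hw5 hw6 using hXw
  -- X is finite
  have hXfin : X.Finite := by
    by_contra hinf
    have hinf' : X.Infinite := hinf
    obtain ⟨F, hFX, hFcard⟩ := hinf'.exists_subset_card_eq (N + 1)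
    set M : ℝ≥0 := F.sup wa with hM
    obtain ⟨a', ha'⟩ := hσ_bij.2 (M + 1)
    have ha'pos : 0 < a' := by
      rcases eq_or_lt_of_le (zero_le (a := a')) with h | h
      · exfalso
        have : σ 0 ≤ σ a' := hσ_mono.monotone (zero_le (a := a'))
        rw [ha'] at this
        have h0 : σ 0 = M + 1 := by rw [← h] at ha'; exact ha'
        have : (0:ℝ≥0) < M + 1 := by positivity
        have h00 : σ 0 = 0 := by
          obtain ⟨t, ht⟩ := hσ_bij.2 0
          have := hσ_mono.monotone (zero_le (a := t))
          rw [ht] at this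
          exact le_antisymm this (zero_le)
        rw [h00] at h0
        exact absurd h0.symm (ne_of_gt this)
      · exact h
    have hbig : ∃ y ∈ X, a' < wa y := by
      by_contra hcon
      push_neg at hcon
      apply hinf
      apply (hfin a' (τ 1) ha'pos hτ1pos).subset
      intro y hy
      exact ⟨⟨wa y, ⟨zero_le, hcon y hy⟩, hw4 y hy⟩,
        ⟨wb y, ⟨zero_le, hw3 y hy⟩, hw5 y hy⟩⟩
    obtain ⟨y, hy, hya⟩ := hbig
    set a := wa y
    set b := wb y
    have hσa : M + 1 ≤ σ a := by rw [← ha']; exact (hσ_mono hya).le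
    have hσapos : 0 < σ a := lt_of_lt_of_le (by positivity) hσa
    have hτbpos : 0 < τ b := lt_trans (lt_trans one_pos (hw2 y hy)) (hτ_gt _ (lt_trans one_pos (hw2 y hy)))
    have hsub : (↑F : Set S) ⊆ (e_s '' Set.Icc 0 (σ a) ∩ e_u '' Set.Icc 0 (τ b)) \ {p} := by
      intro z hz
      have hzX := hFX hz
      refine ⟨⟨⟨wa z, ⟨zero_le, ?_⟩, hw4 z hzX⟩, ⟨wb z, ⟨zero_le, ?_⟩, hw5 z hzX⟩⟩, ?_⟩
      · calc wa z ≤ M := Finset.le_sup hz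
          _ ≤ M + 1 := le_self_add
          _ ≤ σ a := hσa
      · calc wb z ≤ τ 1 := hw3 z hzX
          _ ≤ τ b := (hτ_mono (hw2 y hy)).le
      · simp only [Set.mem_singleton_iff]
        rw [← hw5 z hzX]
        exact hpu _ (lt_trans one_pos (hw2 z hzX))
    have hDfin : ((e_s '' Set.Icc 0 (σ a) ∩ e_u '' Set.Icc 0 (τ b)) \ {p}).Finite :=
      (hfin (σ a) (τ b) hσapos hτbpos).diff
    have hle1 : (N + 1 : ℕ) ≤ N := by
      calc (N + 1 : ℕ) = F.card := hFcard.symm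
        _ = (↑F : Set S).ncard := (Set.ncard_coe_finset F).symm
        _ ≤ ((e_s '' Set.Icc 0 (σ a) ∩ e_u '' Set.Icc 0 (τ b)) \ {p}).ncard :=
            Set.ncard_le_ncard hsub hDfin
        _ = ((e_s '' Set.Icc 0 a ∩ e_u '' Set.Icc 0 b) \ {p}).ncard := nstep a b
        _ ≤ N := hw6 y hy
    omega
  refine ⟨hXfin.toFinset, ?_, ?_⟩
  · intro x hx
    rw [Set.Finite.mem_toFinset] at hx
    obtain ⟨a, b, ha, hb, -, hsa, hub, -⟩ := hx
    exact ⟨⟨a, ha, hsa⟩, ⟨b, lt_trans one_pos hb, hub⟩⟩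
  · intro a b ha hb hab hn
    -- find k with (Te ^ k) b ∈ (1, τ 1]
    have hTnat0 : ∀ (n : ℕ) (t : ℝ≥0), (Te ^ n) t = τ^[n] t := by
      intro n
      induction n with
      | zero => intro t; simp
      | succ m ih =>
        intro t
        rw [pow_succ, Equiv.Perm.mul_apply, Function.iterate_succ_apply]
        exact ih (Te t)
    have hTnat : ∀ (n : ℕ) (t : ℝ≥0), (Te ^ (n:ℤ)) t = τ^[n] t := by
      intro n t
      rw [zpow_natCast]
      exact hTnat0 n t
    have hk : ∃ k : ℤ, 1 < (Te ^ k) b ∧ (Te ^ k) b ≤ τ 1 := by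
      rcases le_or_gt b 1 with hb1 | hb1
      · have hex : ∃ n : ℕ, 1 < τ^[n] b := iter_unbounded_prv τ hτ_cont hτ_gt b hb 1
        have hn1 : 1 < τ^[Nat.find hex] b := Nat.find_spec hex
        have hnpos : Nat.find hex ≠ 0 := by
          intro h0
          rw [h0] at hn1
          simp at hn1
          exact absurd hb1 (not_le.mpr hn1)
        obtain ⟨m, hmeq⟩ := Nat.exists_eq_succ_of_ne_zero hnpos
        rw [hmeq] at hn1
        have hm : ¬ (1 < τ^[m] b) := Nat.find_min hex (by omega)
        push_neg at hm
        refine ⟨(m + 1 : ℕ), ?_, ?_⟩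
        · rw [hTnat]; exact hn1
        · rw [hTnat, Function.iterate_succ_apply']
          exact hτ_mono.monotone hm
      · have hex : ∃ n : ℕ, b ≤ τ^[n] 1 := by
          obtain ⟨n, hn⟩ := iter_unbounded_prv τ hτ_cont hτ_gt 1 one_pos b
          exact ⟨n, hn.le⟩
        have hnb : b ≤ τ^[Nat.find hex] 1 := Nat.find_spec hex
        have hnpos : Nat.find hex ≠ 0 := by
          intro h0
          rw [h0] at hnb
          simp at hnb
          exact absurd hnb (not_le.mpr hb1)
        obtain ⟨m, hmeq⟩ := Nat.exists_eq_succ_of_ne_zero hnpos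
        rw [hmeq] at hnb
        have hm : τ^[m] 1 < b := by
          have := Nat.find_min hex (show m < Nat.find hex by omega)
          push_neg at this
          exact this
        refine ⟨-(m:ℤ), ?_, ?_⟩
        · by_contra hcon
          push_neg at hcon
          have : (Te ^ (m:ℤ)) ((Te ^ (-(m:ℤ))) b) ≤ (Te ^ (m:ℤ)) 1 := by
            rw [hTnat, hTnat]
            exact (hτ_mono.iterate m).monotone hcon
          rw [← Equiv.Perm.mul_apply, ← zpow_add] at this
          simp only [add_neg_cancel, zpow_zero, Equiv.Perm.coe_one, id_eq] at this
          rw [hTnat] at this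
          exact absurd this (not_le.mpr hm)
        · by_contra hcon
          push_neg at hcon
          have : (Te ^ (m:ℤ)) (τ 1) < (Te ^ (m:ℤ)) ((Te ^ (-(m:ℤ))) b) := by
            rw [hTnat, hTnat]
            exact (hτ_mono.iterate m) hcon
          rw [← Equiv.Perm.mul_apply, ← zpow_add] at this
          simp only [add_neg_cancel, zpow_zero, Equiv.Perm.coe_one, id_eq] at this
          rw [hTnat, ← Function.iterate_succ_apply] at this
          exact absurd hnb (not_le.mpr this)
    obtain ⟨k, hk1, hk2⟩ := hk
    set a' := (Sg ^ k) a with ha'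
    set b' := (Te ^ k) b with hb'
    have hxx : (f ^ k) (e_s a) = e_s a' := key_s k a
    have hxx2 : (f ^ k) (e_s a) = e_u b' := by rw [hab]; exact key_u k b
    have hb'pos : 0 < b' := lt_trans one_pos hk1
    have hxp : e_s a' ≠ p := by
      rw [← hxx, hxx2]
      exact hpu _ hb'pos
    have ha'pos : 0 < a' := by
      rcases eq_or_lt_of_le (zero_le (a := a')) with h | h
      · exact absurd (by rw [h] at hs0; exact hs0 : e_s a' = p) hxp
      · exact h
    have hmem : e_s a' ∈ X := by
      refine ⟨a', b', ha'pos, hk1, hk2, rfl, by rw [← hxx, hxx2], ?_⟩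
      rw [ha', hb', ninv k a b]
      exact hn
    refine ⟨e_s a', hXfin.mem_toFinset.mpr hmem, -k, ?_⟩
    rw [← hxx, ← Equiv.Perm.mul_apply, ← zpow_add]
    simp
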